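/- Let I be a nonempty finite index set, b : I → ℝ^d with all coordinates nonnegative, K ≥ 1, and a : I → Fin K an assignment all of whose clusters C_k = a⁻¹(k) are nonempty. Let t : Fin K → ℝ^d be any centers with strictly positive coordinates, and let m_k be the centroid of (b_i)_{i∈C_k}. Then Σ_{i∈I} Σ_{j=1}^d genKL(b_i(j), m_{a(i)}(j)) ≤ Σ_{i∈I} Σ_{j=1}^d genKL(b_i(j), t_{a(i)}(j)); that is, replacing each cluster's center by the cluster's arithmetic mean does not increase the total coordinatewise generalized KL cost. -/

import Mathlib

/-- The generalized Kullback–Leibler divergence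
`genKL(s,t) = s·log(s/t) − s + t` (with Mathlib's conventions
`Real.log 0 = 0` and `x / 0 = 0`). -/
noncomputable def genKL (s t : ℝ) : ℝ := s * Real.log (s / t) - s + t

lemma genKL_nonneg {s t : ℝ} (hs : 0 ≤ s) (ht : 0 < t) : 0 ≤ genKL s t := by
  rcases eq_or_lt_of_le hs with h | h
  · simp [genKL, ← h]; positivity
  · have h1 : Real.log (t / s) ≤ t / s - 1 := Real.log_le_sub_one_of_pos (by positivity)
    have h2 : Real.log (s / t) = - Real.log (t / s) := by
      rw [← Real.log_inv]; congr 1; field_simp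
    have h3 : s * (t / s - 1) = t - s := by field_simp
    have := mul_le_mul_of_nonneg_left h1 hs
    rw [h3] at this
    simp only [genKL, h2]
    nlinarith

lemma genKL_eq {b x : ℝ} (hb : 0 ≤ b) (hx : 0 < x) :
    genKL b x = b * Real.log b - b * Real.log x - b + x := by
  rcases eq_or_lt_of_le hb with h | h
  · simp [genKL, ← h]
  · rw [genKL, Real.log_div h.ne' hx.ne']; ring

lemma cluster_le {I : Type*} [Fintype I] (C : Finset I) (hC : C.Nonempty)
    (f : I → ℝ) (hf : ∀ i, 0 ≤ f i) (t : ℝ) (ht : 0 < t) :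
    ∑ i ∈ C, genKL (f i) ((∑ i ∈ C, f i) / (C.card : ℝ)) ≤ ∑ i ∈ C, genKL (f i) t := by
  set S := ∑ i ∈ C, f i with hS
  have hn : (0:ℝ) < (C.card : ℝ) := by exact_mod_cast Finset.card_pos.2 hC
  have hS0 : 0 ≤ S := Finset.sum_nonneg fun i _ => hf i
  rcases eq_or_lt_of_le hS0 with h0 | hpos
  · have hz : ∀ i ∈ C, f i = 0 := by
      intro i hi
      exact (Finset.sum_eq_zero_iff_of_nonneg (fun i _ => hf i)).1 h0.symm i hi
    have : S / (C.card : ℝ) = 0 := by rw [← h0]; simp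
    rw [this]
    calc ∑ i ∈ C, genKL (f i) 0 = 0 := by
          apply Finset.sum_eq_zero; intro i hi; simp [genKL, hz i hi]
      _ ≤ _ := Finset.sum_nonneg fun i hi => genKL_nonneg (hf i) ht
  · set μ := S / (C.card : ℝ) with hμ
    have hμpos : 0 < μ := by positivity
    have key : ∀ x : ℝ, 0 < x →
        ∑ i ∈ C, genKL (f i) x
          = (∑ i ∈ C, f i * Real.log (f i)) - S * Real.log x - S + (C.card : ℝ) * x := by
      intro x hx
      rw [Finset.sum_congr rfl (fun i _ => genKL_eq (hf i) hx)]
      rw [Finset.sum_add_distrib, Finset.sum_sub_distrib, Finset.sum_sub_distrib,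
        ← Finset.sum_mul, Finset.sum_const, nsmul_eq_mul]
    rw [key μ hμpos, key t ht]
    have hg := genKL_nonneg (le_of_lt hμpos) ht
    have hlog : Real.log (μ / t) = Real.log μ - Real.log t := Real.log_div hμpos.ne' ht.ne'
    have hSm : (C.card : ℝ) * μ = S := by rw [hμ]; field_simp [hn.ne']
    simp only [genKL, hlog] at hg
    nlinarith [mul_le_mul_of_nonneg_left hg (le_of_lt hn)]

/-- centroid-update monotonicity step in the proof of
Theorem 3 of the paper. -/
theorem centroid_update_monotone
    {I : Type*} [Fintype I] [Nonempty I] {d K : ℕ} (hK : 1 ≤ K)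
    (b : I → Fin d → ℝ) (hb : ∀ i j, 0 ≤ b i j)
    (a : I → Fin K)
    (hne : ∀ k : Fin K, ∃ i, a i = k)
    (t : Fin K → Fin d → ℝ) (ht : ∀ k j, 0 < t k j)
    (m : Fin K → Fin d → ℝ)
    (hm : ∀ k j, m k j =
      (∑ i ∈ Finset.univ.filter (fun i => a i = k), b i j) /
        ((Finset.univ.filter (fun i => a i = k)).card : ℝ)) :
    ∑ i, ∑ j, genKL (b i j) (m (a i) j) ≤
      ∑ i, ∑ j, genKL (b i j) (t (a i) j) := by
  rw [Finset.sum_comm, Finset.sum_comm (s := Finset.univ) (t := Finset.univ)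
    (f := fun i j => genKL (b i j) (t (a i) j))]
  apply Finset.sum_le_sum
  intro j _
  have h1 : ∀ (c : Fin K → ℝ), ∑ i : I, genKL (b i j) (c (a i)) =
      ∑ k : Fin K, ∑ i ∈ Finset.univ.filter (fun i => a i = k), genKL (b i j) (c k) := by
    intro c
    rw [← Finset.sum_fiberwise (g := a) (f := fun i => genKL (b i j) (c (a i)))]
    apply Finset.sum_congr rfl; intro k _
    apply Finset.sum_congr rfl; intro i hi
    simp only [Finset.mem_filter] at hi
    rw [hi.2]
  rw [h1 (fun k => m k j), h1 (fun k => t k j)]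
  apply Finset.sum_le_sum
  intro k _
  have hCne : (Finset.univ.filter (fun i => a i = k)).Nonempty := by
    obtain ⟨i, hi⟩ := hne k
    exact ⟨i, by simp [hi]⟩
  rw [hm k j]
  exact cluster_le _ hCne (fun i => b i j) (fun i => hb i j) _ (ht k j)
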